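/- Fix a swap Schelling game (G,b,Λ) with 1/(δ(G)+1) ≤ Λ ≤ 1/2, where δ(G) is the minimum degree of G. Then any strategy profile in which all agents of one color occupy the nodes of an independent set of G is a swap equilibrium. -/

import Mathlib

open Finset

namespace SwapSchelling

variable {V : Type*} [Fintype V] [DecidableEq V]

open scoped Classical in
/-- The closed neighborhood `N[v]` of a node `v` in `G`, as a `Finset`. -/
noncomputable def closedNbhd (G : SimpleGraph V) (v : V) : Finset V :=
  univ.filter (fun u => u = v ∨ G.Adj v u)

open scoped Classical in
/-- The degree `δ(v)` of a node `v` in `G`. -/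
noncomputable def deg (G : SimpleGraph V) (v : V) : ℕ :=
  (univ.filter (fun u => G.Adj v u)).card

/-- The maximum degree `Δ(G)`. -/
noncomputable def maxDeg (G : SimpleGraph V) : ℕ := univ.sup (deg G)

/-- The minimum degree `δ(G)`. -/
noncomputable def minDeg (G : SimpleGraph V) : ℕ := sInf (Set.range (deg G))

open scoped Classical in
/-- `frac G c v` is the fraction of nodes in the closed neighborhood of `v` that have
the same color as `v` (that is, `f_i(σ)` for the agent `i` occupying node `v`). -/
noncomputable def frac (G : SimpleGraph V) (c : V → Bool) (v : V) : ℝ :=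
  (((closedNbhd G v).filter (fun u => c u = c v)).card : ℝ) / ((closedNbhd G v).card : ℝ)

/-- The coloring obtained from `c` after the agents on nodes `v` and `w` swap positions. -/
def swapColor (c : V → Bool) (v w : V) : V → Bool := c ∘ Equiv.swap v w

/-- A single-peaked utility function `p` with peak at `Λ`: `p 0 = 0`, `p` is strictly
increasing on `[0,Λ]`, `p Λ = 1`, and `p x = p (Λ(1-x)/(1-Λ))` for `x ∈ [Λ,1]`. -/
structure IsSinglePeaked (p : ℝ → ℝ) (Λ : ℝ) : Prop where
  peak_mem : Λ ∈ Set.Ioo (0 : ℝ) 1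
  map_zero : p 0 = 0
  strictMonoOn : StrictMonoOn p (Set.Icc 0 Λ)
  map_peak : p Λ = 1
  symm : ∀ x ∈ Set.Icc Λ 1, p x = p (Λ * (1 - x) / (1 - Λ))

/-- A strategy profile: a 2-coloring of the nodes with exactly `b` blue (`true`) nodes. -/
def IsProfile (c : V → Bool) (b : ℕ) : Prop :=
  (univ.filter (fun v => c v = true)).card = b

/-- The structural data of a swap Schelling game `(G, b, Λ)` with utility function `p`:
`G` is connected, there are `b` blue agents with `1 ≤ b ≤ n/2`, and `p` is a
single-peaked utility function with peak `Λ`. -/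
structure IsGame (G : SimpleGraph V) (b : ℕ) (Λ : ℝ) (p : ℝ → ℝ) : Prop where
  connected : G.Connected
  one_le_b : 1 ≤ b
  b_le_half : 2 * b ≤ Fintype.card V
  singlePeaked : IsSinglePeaked p Λ

/-- The swap of the two (differently colored) agents occupying nodes `v` and `w`
is profitable: both agents strictly increase their utility. -/
def ProfitableSwap (G : SimpleGraph V) (p : ℝ → ℝ) (c : V → Bool) (v w : V) : Prop :=
  c v ≠ c w ∧
  p (frac G (swapColor c v w) w) > p (frac G c v) ∧
  p (frac G (swapColor c v w) v) > p (frac G c w)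

/-- A swap equilibrium: no profitable swap exists. -/
def IsSwapEquilibrium (G : SimpleGraph V) (p : ℝ → ℝ) (c : V → Bool) : Prop :=
  ∀ v w, ¬ ProfitableSwap G p c v w

open scoped Classical in
/-- The degree of integration: the number of non-segregated agents. -/
noncomputable def DoI (G : SimpleGraph V) (c : V → Bool) : ℕ :=
  (univ.filter (fun v => frac G c v ≠ 1)).card

open scoped Classical in
/-- The number of monochromatic edges of `G` under the coloring `c`. -/
noncomputable def Phi (G : SimpleGraph V) (c : V → Bool) : ℕ :=
  (G.edgeFinset.filter (fun e => ∀ u ∈ e, ∀ w ∈ e, c u = c w)).card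

open scoped Classical in
/-- The number of edges of `G`. -/
noncomputable def numEdges (G : SimpleGraph V) : ℕ :=
  (univ.filter (fun e : Sym2 V => e ∈ G.edgeSet)).card

/-- A finset of nodes is an independent set of `G`. -/
def IsIndepSet (G : SimpleGraph V) (s : Finset V) : Prop :=
  ∀ u ∈ s, ∀ w ∈ s, ¬ G.Adj u w

open scoped Classical in
/-- The independence number `α(G)`. -/
noncomputable def indepNum (G : SimpleGraph V) : ℕ :=
  univ.sup (fun s : Finset V => if IsIndepSet G s then s.card else 0)

open scoped Classical in
/-- The degree of `v` inside the subgraph of `G` induced by the node set `s`. -/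
noncomputable def degOn (G : SimpleGraph V) (s : Finset V) (v : V) : ℕ :=
  (s.filter (fun u => G.Adj v u)).card



section Aux
set_option linter.unusedSectionVars false

lemma p_nonneg {p : ℝ → ℝ} {Λ : ℝ} (hp : IsSinglePeaked p Λ) {x : ℝ}
    (hx0 : 0 ≤ x) (hx1 : x ≤ 1) : 0 ≤ p x := by
  obtain ⟨hΛ0, hΛ1⟩ := hp.peak_mem
  have h1Λ : (0:ℝ) < 1 - Λ := by linarith
  rcases le_or_gt x Λ with h | h
  · have := hp.strictMonoOn.monotoneOn (Set.mem_Icc.2 ⟨le_refl 0, hΛ0.le⟩)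
      (Set.mem_Icc.2 ⟨hx0, h⟩) hx0
    rw [hp.map_zero] at this; exact this
  · rw [hp.symm x ⟨h.le, hx1⟩]
    have hm0 : 0 ≤ Λ * (1 - x) / (1 - Λ) :=
      div_nonneg (mul_nonneg hΛ0.le (by linarith)) h1Λ.le
    have hmΛ : Λ * (1 - x) / (1 - Λ) ≤ Λ := by
      rw [div_le_iff₀ h1Λ]; nlinarith
    have := hp.strictMonoOn.monotoneOn (Set.mem_Icc.2 ⟨le_refl 0, hΛ0.le⟩)
      (Set.mem_Icc.2 ⟨hm0, hmΛ⟩) hm0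
    rw [hp.map_zero] at this; exact this

lemma p_one {p : ℝ → ℝ} {Λ : ℝ} (hp : IsSinglePeaked p Λ) : p 1 = 0 := by
  obtain ⟨hΛ0, hΛ1⟩ := hp.peak_mem
  have := hp.symm 1 ⟨hΛ1.le, le_refl 1⟩
  simpa [hp.map_zero] using this

lemma lt_of_p_lt {p : ℝ → ℝ} {Λ : ℝ} (hp : IsSinglePeaked p Λ) {x y : ℝ}
    (hx : x ∈ Set.Icc 0 Λ) (hy : y ∈ Set.Icc 0 Λ) (h : p x < p y) : x < y := by
  by_contra hle
  push_neg at hle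
  exact absurd (hp.strictMonoOn.monotoneOn hy hx hle) (not_le.2 h)

lemma core {p : ℝ → ℝ} {Λ : ℝ} (hp : IsSinglePeaked p Λ) (hΛ₂ : Λ ≤ 1/2)
    {a s : ℝ} (ha0 : 0 ≤ a) (haΛ : a ≤ Λ) (hs0 : 0 ≤ s) (hs1 : s ≤ 1)
    (h1 : p a < p s) (h2 : p (1 - s) < p (1 - a)) : False := by
  obtain ⟨hΛ0, hΛ1⟩ := hp.peak_mem
  have h1Λ : (0:ℝ) < 1 - Λ := by linarith
  -- rewrite p (1 - a) = p (Λ * a / (1 - Λ))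
  have hA : p (1 - a) = p (Λ * a / (1 - Λ)) := by
    have := hp.symm (1 - a) ⟨by linarith, by linarith⟩
    convert this using 3; ring
  have hAmem : Λ * a / (1 - Λ) ∈ Set.Icc (0:ℝ) Λ := by
    constructor
    · positivity
    · rw [div_le_iff₀ h1Λ]; nlinarith
  rw [hA] at h2
  rcases le_or_gt s Λ with hsΛ | hsΛ
  · have hlt : a < s := lt_of_p_lt hp ⟨ha0, haΛ⟩ ⟨hs0, hsΛ⟩ h1
    have hS : p (1 - s) = p (Λ * s / (1 - Λ)) := by
      have := hp.symm (1 - s) ⟨by linarith, by linarith⟩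
      convert this using 3; ring
    rw [hS] at h2
    have hSmem : Λ * s / (1 - Λ) ∈ Set.Icc (0:ℝ) Λ := by
      constructor
      · positivity
      · rw [div_le_iff₀ h1Λ]; nlinarith
    have := lt_of_p_lt hp hSmem hAmem h2
    rw [div_lt_div_iff₀ h1Λ h1Λ] at this
    nlinarith [mul_pos hΛ0 h1Λ]
  · -- s > Λ
    have hS : p s = p (Λ * (1 - s) / (1 - Λ)) := hp.symm s ⟨hsΛ.le, hs1⟩
    rw [hS] at h1
    have hSmem : Λ * (1 - s) / (1 - Λ) ∈ Set.Icc (0:ℝ) Λ := by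
      constructor
      · exact div_nonneg (mul_nonneg hΛ0.le (by linarith)) h1Λ.le
      · rw [div_le_iff₀ h1Λ]; nlinarith
    have key1 : a < Λ * (1 - s) / (1 - Λ) := lt_of_p_lt hp ⟨ha0, haΛ⟩ hSmem h1
    rw [lt_div_iff₀ h1Λ] at key1
    rcases le_or_gt Λ (1 - s) with hw | hw
    · have hS2 : p (1 - s) = p (Λ * s / (1 - Λ)) := by
        have := hp.symm (1 - s) ⟨hw, by linarith⟩
        convert this using 3; ring
      rw [hS2] at h2
      have hS2mem : Λ * s / (1 - Λ) ∈ Set.Icc (0:ℝ) Λ := by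
        constructor
        · positivity
        · rw [div_le_iff₀ h1Λ]; nlinarith
      have := lt_of_p_lt hp hS2mem hAmem h2
      rw [div_lt_div_iff₀ h1Λ h1Λ] at this
      nlinarith
    · have := lt_of_p_lt hp ⟨by linarith, hw.le⟩ hAmem h2
      rw [lt_div_iff₀ h1Λ] at this
      nlinarith

open scoped Classical

lemma mem_closedNbhd {G : SimpleGraph V} {v u : V} :
    u ∈ closedNbhd G v ↔ u = v ∨ G.Adj v u := by
  simp [closedNbhd]

lemma card_closedNbhd (G : SimpleGraph V) (v : V) :
    (closedNbhd G v).card = deg G v + 1 := by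
  have h : closedNbhd G v = insert v (univ.filter (fun u => G.Adj v u)) := by
    ext u
    simp [closedNbhd, or_comm]
  rw [h, card_insert_of_notMem (by simp), deg, add_comm]

lemma swapColor_left (c : V → Bool) (v w : V) : swapColor c v w v = c w := by
  simp [swapColor]

lemma swapColor_right (c : V → Bool) (v w : V) : swapColor c v w w = c v := by
  simp [swapColor]

lemma swapColor_other (c : V → Bool) {v w u : V} (h1 : u ≠ v) (h2 : u ≠ w) :
    swapColor c v w u = c u := by
  simp [swapColor, Equiv.swap_apply_of_ne_of_ne h1 h2]

lemma bool_eq_of_ne {x y z : Bool} (h1 : x ≠ z) (h2 : y ≠ z) : x = y := by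
  revert h1 h2; revert x y z; decide

-- frac of a k-agent on an independent set
lemma frac_indep {G : SimpleGraph V} {c : V → Bool} {k : Bool}
    (hind : ∀ u u', c u = k → c u' = k → ¬ G.Adj u u') {v : V} (hv : c v = k) :
    frac G c v = 1 / ((deg G v : ℝ) + 1) := by
  have h : (closedNbhd G v).filter (fun u => c u = c v) = {v} := by
    ext u
    simp only [mem_filter, mem_closedNbhd, mem_singleton]
    constructor
    · rintro ⟨hu | hadj, hc⟩
      · exact hu
      · exact absurd hadj (hind v u hv (hc.trans hv))
    · rintro rfl; exact ⟨Or.inl rfl, rfl⟩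
  rw [frac, h, card_closedNbhd]
  simp

lemma profitableSwap_symm {G : SimpleGraph V} {p : ℝ → ℝ} {c : V → Bool} {v w : V}
    (h : ProfitableSwap G p c v w) : ProfitableSwap G p c w v := by
  obtain ⟨hne, h1, h2⟩ := h
  have hs : swapColor c w v = swapColor c v w := by
    funext u; simp [swapColor, Equiv.swap_comm]
  exact ⟨hne.symm, by rw [hs]; exact h2, by rw [hs]; exact h1⟩

lemma no_profit {G : SimpleGraph V} {Λ : ℝ} {p : ℝ → ℝ} (hp : IsSinglePeaked p Λ)
    (p_nonneg : ∀ x : ℝ, 0 ≤ x → x ≤ 1 → 0 ≤ p x) (p_one : p 1 = 0)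
    (core : ∀ a s : ℝ, 0 ≤ a → a ≤ Λ → 0 ≤ s → s ≤ 1 →
      p a < p s → p (1 - s) < p (1 - a) → False)
    (hΛ₁ : 1 / ((minDeg G : ℝ) + 1) ≤ Λ) (hΛ₂ : Λ ≤ 1/2)
    {c : V → Bool} {k : Bool} (hind : ∀ u u', c u = k → c u' = k → ¬ G.Adj u u')
    {v w : V} (hv : c v = k) (hw : c w ≠ k) : ¬ ProfitableSwap G p c v w := by
  rintro ⟨hne, h1, h2⟩
  have hvw : v ≠ w := fun h => hw (h ▸ hv)
  set c' := swapColor c v w with hc'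
  have hc'v : c' v = c w := swapColor_left c v w
  have hc'w : c' w = c v := swapColor_right c v w
  -- degree facts
  have hdpos : (0:ℝ) < (deg G v : ℝ) + 1 := by positivity
  have hdwpos : (0:ℝ) < (deg G w : ℝ) + 1 := by positivity
  have hminle : minDeg G ≤ deg G v := Nat.sInf_le ⟨v, rfl⟩
  have haΛ : 1 / ((deg G v : ℝ) + 1) ≤ Λ := by
    refine le_trans ?_ hΛ₁
    apply one_div_le_one_div_of_le
    · positivity
    · push_cast
      have := (Nat.cast_le (α := ℝ)).2 hminle
      linarith
  -- the set of k-colored neighbors of w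
  set N : Finset V := univ.filter (fun u => G.Adj w u) with hN
  set T : Finset V := univ.filter (fun u => G.Adj w u ∧ c u = k) with hT
  have hTN : T = N.filter (fun u => c u = k) := by
    rw [hN, filter_filter]
  have htle : T.card ≤ deg G w := by
    rw [hTN]
    exact le_trans (card_filter_le _ _) (le_of_eq rfl)
  -- frac of w under c
  have hfw : frac G c w = ((deg G w : ℝ) + 1 - T.card) / ((deg G w : ℝ) + 1) := by
    have hset : (closedNbhd G w).filter (fun u => c u = c w)
        = insert w (N.filter (fun u => ¬ (c u = k))) := by
      ext u
      simp only [mem_filter, mem_closedNbhd, mem_insert, hN, mem_univ, true_and]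
      constructor
      · rintro ⟨hu | hadj, hcu⟩
        · exact Or.inl hu
        · exact Or.inr ⟨hadj, fun h => hw (hcu ▸ h)⟩
      · rintro (rfl | ⟨hadj, hcu⟩)
        · exact ⟨Or.inl rfl, rfl⟩
        · exact ⟨Or.inr hadj, bool_eq_of_ne hcu hw⟩
    have hwN : w ∉ N.filter (fun u => ¬ (c u = k)) := by
      simp [hN]
    have hpart : (N.filter (fun u => c u = k)).card
        + (N.filter (fun u => ¬ (c u = k))).card = N.card :=
      card_filter_add_card_filter_not _
    have hNcard : N.card = deg G w := rfl
    have hnat : ((closedNbhd G w).filter (fun u => c u = c w)).card + T.card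
        = deg G w + 1 := by
      rw [hset, card_insert_of_notMem hwN, hTN]
      omega
    rw [frac, card_closedNbhd]
    have : (((closedNbhd G w).filter (fun u => c u = c w)).card : ℝ)
        = (deg G w : ℝ) + 1 - T.card := by
      have := congrArg (Nat.cast : ℕ → ℝ) hnat
      push_cast at this ⊢
      linarith
    rw [this]
    push_cast
    ring_nf
  have hfw01 : 0 ≤ frac G c w ∧ frac G c w ≤ 1 := by
    rw [hfw]
    constructor
    · apply div_nonneg _ hdwpos.le
      have : (T.card : ℝ) ≤ (deg G w : ℝ) := by exact_mod_cast htle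
      linarith
    · rw [div_le_one hdwpos]
      have : (0:ℝ) ≤ (T.card : ℝ) := by positivity
      linarith
  by_cases hadj : G.Adj v w
  · -- adjacent case
    have hvT : v ∈ T := by
      simp [hT, hadj.symm, hv]
    have ht1 : 1 ≤ T.card := card_pos.2 ⟨v, hvT⟩
    -- frac of the k-agent after the swap (at w)
    have hfw' : frac G c' w = (T.card : ℝ) / ((deg G w : ℝ) + 1) := by
      have hset : (closedNbhd G w).filter (fun u => c' u = c' w)
          = insert w (T.erase v) := by
        ext u
        simp only [mem_filter, mem_closedNbhd, mem_insert, mem_erase, hT,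
          mem_univ, true_and]
        constructor
        · rintro ⟨hu | hadj', hcu⟩
          · exact Or.inl hu
          · rcases eq_or_ne u w with rfl | huw
            · exact Or.inl rfl
            · rcases eq_or_ne u v with rfl | huv
              · exfalso
                rw [hc'v, hc'w] at hcu
                exact hw (hcu.trans hv)
              · rw [show c' u = c u from swapColor_other c huv huw, hc'w, hv] at hcu
                exact Or.inr ⟨huv, hadj', hcu⟩
        · rintro (rfl | ⟨huv, hadj', hcu⟩)
          · exact ⟨Or.inl rfl, rfl⟩
          · have huw : u ≠ w := fun h => (G.irrefl (h ▸ hadj'))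
            refine ⟨Or.inr hadj', ?_⟩
            rw [show c' u = c u from swapColor_other c huv huw, hc'w, hv, hcu]
      have hwT : w ∉ T.erase v := by
        simp [hT]
      have : ((closedNbhd G w).filter (fun u => c' u = c' w)).card = T.card := by
        rw [hset, card_insert_of_notMem hwT, card_erase_of_mem hvT]
        omega
      rw [frac, this, card_closedNbhd]
      push_cast
      ring_nf
    -- frac of the other agent after the swap (at v)
    have hfv' : frac G c' v = (deg G v : ℝ) / ((deg G v : ℝ) + 1) := by
      have hset : (closedNbhd G v).filter (fun u => c' u = c' v)
          = (closedNbhd G v).erase w := by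
        ext u
        simp only [mem_filter, mem_closedNbhd, mem_erase]
        constructor
        · rintro ⟨hu, hcu⟩
          refine ⟨?_, hu⟩
          rintro rfl
          rw [hc'w, hc'v, hv] at hcu
          exact hw hcu.symm
        · rintro ⟨huw, hu | hadj'⟩
          · exact ⟨Or.inl hu, by rw [hu]⟩
          · have huv : u ≠ v := fun h => G.irrefl (h ▸ hadj')
            refine ⟨Or.inr hadj', ?_⟩
            rw [show c' u = c u from swapColor_other c huv huw, hc'v]
            have hcuk : c u ≠ k := fun h => hind v u hv h hadj'
            exact bool_eq_of_ne hcuk hw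
      have hwmem : w ∈ closedNbhd G v := mem_closedNbhd.2 (Or.inr hadj)
      have : ((closedNbhd G v).filter (fun u => c' u = c' v)).card = deg G v := by
        rw [hset, card_erase_of_mem hwmem, card_closedNbhd]
        omega
      rw [frac, this, card_closedNbhd]
      push_cast
      ring_nf
    -- apply the core lemma
    have hfv : frac G c v = 1 / ((deg G v : ℝ) + 1) := frac_indep hind hv
    set a := 1 / ((deg G v : ℝ) + 1) with hadef
    set s := (T.card : ℝ) / ((deg G w : ℝ) + 1) with hsdef
    have hs1 : s ≤ 1 := by
      rw [hsdef, div_le_one hdwpos]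
      have : (T.card : ℝ) ≤ (deg G w : ℝ) := by exact_mod_cast htle
      linarith
    have heq1 : frac G c w = 1 - s := by
      rw [hfw, hsdef]
      field_simp
    have heq2 : frac G c' v = 1 - a := by
      rw [hfv', hadef]
      field_simp
      ring
    refine core a s (by positivity) haΛ (by positivity) hs1 ?_ ?_
    · rw [← hfv, ← hfw']
      exact h1
    · rw [← heq1, ← heq2]
      exact h2
  · -- non-adjacent case: the agent moving to v becomes fully segregated
    have hfv' : frac G c' v = 1 := by
      have hset : (closedNbhd G v).filter (fun u => c' u = c' v) = closedNbhd G v := by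
        apply filter_true_of_mem
        intro u hu
        rcases mem_closedNbhd.1 hu with rfl | hadj'
        · rfl
        · have huv : u ≠ v := fun h => G.irrefl (h ▸ hadj')
          have huw : u ≠ w := fun h => hadj (h ▸ hadj')
          rw [show c' u = c u from swapColor_other c huv huw, hc'v]
          have hcuk : c u ≠ k := fun h => hind v u hv h hadj'
          exact bool_eq_of_ne hcuk hw
      rw [frac, hset, div_self]
      rw [card_closedNbhd]
      positivity
    rw [hfv', p_one] at h2
    exact absurd (p_nonneg _ hfw01.1 hfw01.2) (not_le.2 h2)

end Aux

/-- For a game `(G,b,Λ)` with `1/(δ(G)+1) ≤ Λ ≤ 1/2`, any strategy profile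
in which all agents of one color occupy an independent set of `G` is a swap equilibrium. -/
theorem independent_set_profile_is_swap_equilibrium
    {V : Type*} [Fintype V] [DecidableEq V] (G : SimpleGraph V) (b : ℕ) (Λ : ℝ) (p : ℝ → ℝ)
    (hgame : IsGame G b Λ p)
    (hΛ₁ : 1 / ((minDeg G : ℝ) + 1) ≤ Λ) (hΛ₂ : Λ ≤ 1 / 2)
    (c : V → Bool) (hc : IsProfile c b) (k : Bool)
    (hind : IsIndepSet G (Finset.univ.filter (fun v => c v = k))) :
    IsSwapEquilibrium G p c := by
  classical
  intro v w hps
  have hp := hgame.singlePeaked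
  have hind' : ∀ u u', c u = k → c u' = k → ¬ G.Adj u u' := by
    intro u u' hu hu'
    exact hind u (by simp [hu]) u' (by simp [hu'])
  have hpn : ∀ x : ℝ, 0 ≤ x → x ≤ 1 → 0 ≤ p x := fun x h0 h1 => p_nonneg hp h0 h1
  have hcore : ∀ a s : ℝ, 0 ≤ a → a ≤ Λ → 0 ≤ s → s ≤ 1 →
      p a < p s → p (1 - s) < p (1 - a) → False :=
    fun a s h1 h2 h3 h4 h5 h6 => core hp hΛ₂ h1 h2 h3 h4 h5 h6
  by_cases hv : c v = k
  · have hw : c w ≠ k := fun h => hps.1 (hv.trans h.symm)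
    exact no_profit hp hpn (p_one hp) hcore hΛ₁ hΛ₂ hind' hv hw hps
  · have hw : c w = k := bool_eq_of_ne hps.1.symm (fun h => hv h.symm)
    exact no_profit hp hpn (p_one hp) hcore hΛ₁ hΛ₂ hind' hw hv (profitableSwap_symm hps)

end SwapSchelling
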